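/- For every w ∈ H¹([-π/2, π/2]) with w(-π/2) = w(π/2) = 0, (1/4)∫_{-π/2}^{π/2} sec²(s) w(s)² ds ≤ ∫_{-π/2}^{π/2} w'(s)² ds - (1/4)∫_{-π/2}^{π/2} w(s)² ds. -/

import Mathlib

open Real MeasureTheory intervalIntegral
open Topology Filter

section Aux
variable (w w' : ℝ → ℝ)

lemma bl_contOn (hderiv : ∀ s ∈ Set.Icc (-(π/2)) (π/2), HasDerivAt w (w' s) s) :
    ContinuousOn w (Set.Icc (-(π/2)) (π/2)) :=
  fun s hs => ((hderiv s hs).continuousAt).continuousWithinAt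

lemma bl_w'_meas (hderiv : ∀ s ∈ Set.Icc (-(π/2)) (π/2), HasDerivAt w (w' s) s)
    {a b : ℝ} (hab : Set.uIcc a b ⊆ Set.Icc (-(π/2)) (π/2)) :
    AEStronglyMeasurable w' (volume.restrict (Set.uIoc a b)) := by
  refine (measurable_deriv w).aestronglyMeasurable.congr ?_
  refine (ae_restrict_iff' measurableSet_uIoc).2 (ae_of_all _ fun x hx => ?_)
  exact (hderiv x (hab (Set.uIoc_subset_uIcc hx))).deriv

lemma bl_w'_int (hderiv : ∀ s ∈ Set.Icc (-(π/2)) (π/2), HasDerivAt w (w' s) s)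
    (hL2 : IntervalIntegrable (fun s => (w' s) ^ 2) volume (-(π/2)) (π/2))
    {a b : ℝ} (hab : Set.uIcc a b ⊆ Set.Icc (-(π/2)) (π/2)) :
    IntervalIntegrable w' volume a b := by
  have hpi : -(π/2) ≤ π/2 := by linarith [pi_pos]
  have hsq : IntervalIntegrable (fun s => (w' s) ^ 2) volume a b :=
    hL2.mono_set (by rwa [Set.uIcc_of_le hpi])
  refine (((_root_.intervalIntegrable_const (c := (1:ℝ))).add hsq).div_const 2).mono_fun
    (bl_w'_meas w w' hderiv hab) (ae_of_all _ fun x => ?_)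
  simp only [norm_eq_abs]
  have h1 : |w' x| ≤ (1 + w' x ^ 2) / 2 := by nlinarith [sq_nonneg (|w' x| - 1), sq_abs (w' x)]
  calc |w' x| ≤ (1 + w' x ^ 2) / 2 := h1
    _ ≤ |(1 + w' x ^ 2) / 2| := le_abs_self _

lemma bl_ftc (hderiv : ∀ s ∈ Set.Icc (-(π/2)) (π/2), HasDerivAt w (w' s) s)
    (hL2 : IntervalIntegrable (fun s => (w' s) ^ 2) volume (-(π/2)) (π/2))
    {a b : ℝ} (hab : Set.uIcc a b ⊆ Set.Icc (-(π/2)) (π/2)) :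
    ∫ s in a..b, w' s = w b - w a :=
  integral_eq_sub_of_hasDerivAt (fun x hx => hderiv x (hab hx)) (bl_w'_int w w' hderiv hL2 hab)

end Aux

lemma bl_cs (w' : ℝ → ℝ) {x y : ℝ} (hxy : x < y)
    (hI : IntervalIntegrable (fun s => (w' s) ^ 2) volume x y)
    (hint : IntervalIntegrable w' volume x y) :
    (∫ s in x..y, w' s) ^ 2 ≤ (y - x) * ∫ s in x..y, (w' s) ^ 2 := by
  have hδ : 0 < y - x := by linarith
  set T := ∫ s in x..y, (w' s) ^ 2 with hT
  have hT0 : 0 ≤ T := integral_nonneg hxy.le fun s _ => sq_nonneg _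
  have key : ∀ ε : ℝ, 0 < ε → |∫ s in x..y, w' s| ≤ (ε * (y - x) + T / ε) / 2 := by
    intro ε hε
    have h1 : |∫ s in x..y, w' s| ≤ ∫ s in x..y, |w' s| := abs_integral_le_integral_abs hxy.le
    have h2 : ∫ s in x..y, |w' s| ≤ ∫ s in x..y, (ε / 2 + (w' s) ^ 2 / (2 * ε)) := by
      refine integral_mono_on hxy.le hint.abs
        ((_root_.intervalIntegrable_const.add (hI.div_const (2 * ε)))) fun s _ => ?_
      rw [show ε / 2 + (w' s) ^ 2 / (2 * ε) = (ε ^ 2 + w' s ^ 2) / (2 * ε) by field_simp,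
        le_div_iff₀ (by positivity)]
      nlinarith [sq_nonneg (|w' s| - ε), sq_abs (w' s)]
    have h3 : ∫ s in x..y, (ε / 2 + (w' s) ^ 2 / (2 * ε)) = ε / 2 * (y - x) + T / (2 * ε) := by
      rw [integral_add _root_.intervalIntegrable_const (hI.div_const (2 * ε)),
        intervalIntegral.integral_const, intervalIntegral.integral_div]
      rw [smul_eq_mul]; ring
    calc |∫ s in x..y, w' s| ≤ ε / 2 * (y - x) + T / (2 * ε) := by linarith
      _ = (ε * (y - x) + T / ε) / 2 := by field_simp
  rcases eq_or_lt_of_le hT0 with hT0' | hTpos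
  · have habs : |∫ s in x..y, w' s| ≤ 0 := by
      refine le_of_forall_pos_le_add fun ε hε => ?_
      have := key (2 * ε / (y - x)) (by positivity)
      rw [← hT0'] at this
      calc |∫ s in x..y, w' s| ≤ (2 * ε / (y - x) * (y - x) + 0 / (2 * ε / (y - x))) / 2 := this
        _ = ε := by field_simp; ring
        _ ≤ 0 + ε := by linarith
    have h0 : (∫ s in x..y, w' s) = 0 := abs_eq_zero.1 (le_antisymm habs (abs_nonneg _))
    rw [h0, ← hT0']; nlinarith
  · obtain ⟨ε, hεpos, hε2⟩ : ∃ ε : ℝ, 0 < ε ∧ ε ^ 2 = T / (y - x) :=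
      ⟨Real.sqrt (T / (y - x)), Real.sqrt_pos.2 (by positivity), Real.sq_sqrt (by positivity)⟩
    have hT' : ε ^ 2 * (y - x) = T := by
      rw [hε2]; field_simp
    have hTε : T / ε = ε * (y - x) := by
      rw [← hT', sq, mul_assoc, mul_div_cancel_left₀ _ hεpos.ne']
    have hkey := key ε hεpos
    rw [hTε] at hkey
    have h4 : |∫ s in x..y, w' s| ≤ ε * (y - x) := by linarith
    have h5 : (∫ s in x..y, w' s) ^ 2 ≤ (ε * (y - x)) ^ 2 := by
      rw [← sq_abs]
      exact pow_le_pow_left₀ (abs_nonneg _) h4 2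
    calc (∫ s in x..y, w' s) ^ 2 ≤ (ε * (y - x)) ^ 2 := h5
      _ = (y - x) * T := by rw [← hT']; ring

-- tan b ≤ 1/(π/2 - b)
lemma bl_tan_le {b : ℝ} (hb0 : 0 < b) (hb : b < π/2) : tan b ≤ (π/2 - b)⁻¹ := by
  have h1 : π/2 - b < tan (π/2 - b) := lt_tan (by linarith) (by linarith)
  have h2 : tan (π/2 - b) = (tan b)⁻¹ := tan_pi_div_two_sub b
  have htb : 0 < tan b := tan_pos_of_pos_of_lt_pi_div_two hb0 hb
  rw [h2] at h1
  calc tan b = ((tan b)⁻¹)⁻¹ := by rw [inv_inv]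
    _ ≤ (π/2 - b)⁻¹ := by
        apply inv_anti₀ (by linarith) h1.le

section Compact
variable (w w' : ℝ → ℝ)

lemma bl_compact
    (hderiv : ∀ s ∈ Set.Icc (-(π/2)) (π/2), HasDerivAt w (w' s) s)
    (hL2 : IntervalIntegrable (fun s => (w' s) ^ 2) volume (-(π/2)) (π/2))
    {b : ℝ} (hb0 : 0 < b) (hb : b < π/2) :
    (1/4) * ∫ s in (-b)..b, (w s) ^ 2 / cos s ^ 2 ≤
      (∫ s in (-b)..b, (w' s) ^ 2) - (1/4) * (∫ s in (-b)..b, (w s) ^ 2)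
        + (1/2) * (tan b * (w b) ^ 2 + tan b * (w (-b)) ^ 2) := by
  have hbb : -b ≤ b := by linarith
  have huIcc : Set.uIcc (-b) b = Set.Icc (-b) b := Set.uIcc_of_le hbb
  have hsub : Set.uIcc (-b) b ⊆ Set.Icc (-(π/2)) (π/2) := by
    rw [huIcc]; exact Set.Icc_subset_Icc (by linarith) (by linarith)
  have hcos : ∀ s ∈ Set.uIcc (-b) b, 0 < cos s := by
    intro s hs
    rw [huIcc] at hs
    exact Real.cos_pos_of_mem_Ioo ⟨by linarith [hs.1], by linarith [hs.2]⟩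
  have hwc : ContinuousOn w (Set.uIcc (-b) b) := (bl_contOn w w' hderiv).mono hsub
  -- integrabilities
  have hpi : -(π/2) ≤ π/2 := by linarith [pi_pos]
  have hI2 : IntervalIntegrable (fun s => (w' s) ^ 2) volume (-b) b :=
    hL2.mono_set (by rw [Set.uIcc_of_le hpi]; exact hsub)
  have hIw' : IntervalIntegrable w' volume (-b) b := bl_w'_int w w' hderiv hL2 hsub
  have htanc : ContinuousOn (fun s => tan s * w s) (Set.uIcc (-b) b) := by
    refine ContinuousOn.mul ?_ hwc
    exact fun s hs => (Real.continuousAt_tan.2 (hcos s hs).ne').continuousWithinAt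
  obtain ⟨C, hC⟩ := isCompact_uIcc.exists_bound_of_continuousOn htanc
  have hItww' : IntervalIntegrable (fun s => tan s * w s * w' s) volume (-b) b := by
    have hg : IntervalIntegrable (fun s => C * |w' s|) volume (-b) b := hIw'.abs.const_mul C
    refine hg.mono_fun ?_ ?_
    · exact ((htanc.mono Set.uIoc_subset_uIcc).aestronglyMeasurable measurableSet_uIoc).mul
        (bl_w'_meas w w' hderiv hsub)
    · filter_upwards [ae_restrict_mem measurableSet_uIoc] with s hs
      have h1 : ‖tan s * w s‖ ≤ C := hC s (Set.uIoc_subset_uIcc hs)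
      simp only [norm_eq_abs] at h1 ⊢
      have h2 : |tan s * w s * w' s| = |tan s * w s| * |w' s| := abs_mul _ _
      rw [h2]
      refine le_trans (mul_le_mul_of_nonneg_right (h1.trans (le_abs_self C)) (abs_nonneg _)) ?_
      rw [abs_mul, abs_abs]
  have hItan2 : IntervalIntegrable (fun s => tan s ^ 2 * w s ^ 2) volume (-b) b := by
    apply ContinuousOn.intervalIntegrable
    exact ContinuousOn.congr (htanc.mul htanc) fun s hs => by show tan s ^ 2 * w s ^ 2 = tan s * w s * (tan s * w s); ring
  have hIw2 : IntervalIntegrable (fun s => w s ^ 2) volume (-b) b :=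
    (hwc.pow 2).intervalIntegrable
  have hIsec : IntervalIntegrable (fun s => 1 / cos s ^ 2 * w s ^ 2) volume (-b) b := by
    apply ContinuousOn.intervalIntegrable
    exact (continuousOn_const.div ((Real.continuousOn_cos.mono (Set.subset_univ _)).pow 2)
      fun s hs => pow_ne_zero 2 (hcos s hs).ne').mul (hwc.pow 2)
  -- FTC for F s = 1/2 * (tan s * w s ^ 2)
  set d : ℝ → ℝ := fun s => 1/2 * (1 / cos s ^ 2 * w s ^ 2) + tan s * w s * w' s with hd
  have hdint : IntervalIntegrable d volume (-b) b := (hIsec.const_mul (1/2)).add hItww'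
  have hFTC : ∫ s in (-b)..b, d s
      = 1/2 * (tan b * w b ^ 2) - 1/2 * (tan (-b) * w (-b) ^ 2) := by
    refine integral_eq_sub_of_hasDerivAt (f := fun s => 1/2 * (tan s * w s ^ 2)) (fun s hs => ?_) hdint
    have h1 : HasDerivAt (fun s => w s ^ 2) (2 * w s * w' s) s := by
      have := (hderiv s (hsub hs)).fun_pow 2
      simpa using this
    have h2 := ((Real.hasDerivAt_tan (hcos s hs).ne').fun_mul h1).const_mul (1/2 : ℝ)
    exact h2.congr_deriv (by rw [hd]; ring)
  have hsplit : ∫ s in (-b)..b, d s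
      = 1/2 * (∫ s in (-b)..b, 1 / cos s ^ 2 * w s ^ 2) + ∫ s in (-b)..b, tan s * w s * w' s := by
    rw [hd, integral_add (hIsec.const_mul (1/2)) hItww', intervalIntegral.integral_const_mul]
  -- expansion of the square
  have hnn : 0 ≤ ∫ s in (-b)..b, (w' s + 1/2 * tan s * w s) ^ 2 :=
    integral_nonneg hbb fun s _ => sq_nonneg _
  have hexp : ∫ s in (-b)..b, (w' s + 1/2 * tan s * w s) ^ 2
      = (∫ s in (-b)..b, (w' s) ^ 2) + (∫ s in (-b)..b, tan s * w s * w' s)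
        + 1/4 * ∫ s in (-b)..b, tan s ^ 2 * w s ^ 2 := by
    rw [show (fun s => (w' s + 1/2 * tan s * w s) ^ 2)
        = fun s => (w' s) ^ 2 + (tan s * w s * w' s + 1/4 * (tan s ^ 2 * w s ^ 2)) by
      funext s; ring]
    rw [integral_add hI2 (hItww'.add (hItan2.const_mul (1/4))),
      integral_add hItww' (hItan2.const_mul (1/4)), intervalIntegral.integral_const_mul]
    ring
  have htan2 : ∫ s in (-b)..b, tan s ^ 2 * w s ^ 2
      = (∫ s in (-b)..b, 1 / cos s ^ 2 * w s ^ 2) - ∫ s in (-b)..b, w s ^ 2 := by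
    rw [← integral_sub hIsec hIw2]
    refine integral_congr fun s hs => ?_
    have hc := (hcos s hs).ne'
    rw [Real.tan_eq_sin_div_cos, div_pow, Real.sin_sq]
    field_simp
  have hLHS : ∫ s in (-b)..b, (w s) ^ 2 / cos s ^ 2
      = ∫ s in (-b)..b, 1 / cos s ^ 2 * w s ^ 2 :=
    integral_congr fun s hs => by ring
  have htneg : tan (-b) = -tan b := Real.tan_neg b
  rw [hLHS]
  rw [hFTC, htneg] at hsplit
  linarith [hnn, hexp, hsplit, htan2]

end Compact


section PerB
variable (w w' : ℝ → ℝ)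

lemma bl_perb
    (hderiv : ∀ s ∈ Set.Icc (-(π/2)) (π/2), HasDerivAt w (w' s) s)
    (hL2 : IntervalIntegrable (fun s => (w' s) ^ 2) volume (-(π/2)) (π/2))
    (hbc1 : w (-(π/2)) = 0) (hbc2 : w (π/2) = 0)
    {b : ℝ} (hb0 : 0 < b) (hb : b < π/2)
    {C : ℝ} (hC : ∀ x ∈ Set.Icc (-(π/2)) (π/2), ‖w x‖ ≤ C) :
    (1/4) * ∫ s in (-b)..b, (w s) ^ 2 / cos s ^ 2 ≤
      (∫ s in (-(π/2))..(π/2), (w' s) ^ 2) - (1/4) * (∫ s in (-(π/2))..(π/2), (w s) ^ 2)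
        + (1/2) * (π/2 - b) * C ^ 2 := by
  have hpi : (0:ℝ) < π/2 := by positivity
  have huB : Set.uIcc (-(π/2)) (π/2) = Set.Icc (-(π/2)) (π/2) := Set.uIcc_of_le (by linarith)
  have hsubL : Set.uIcc (-(π/2)) (-b) ⊆ Set.Icc (-(π/2)) (π/2) := by
    rw [Set.uIcc_of_le (by linarith)]; exact Set.Icc_subset_Icc le_rfl (by linarith)
  have hsubR : Set.uIcc b (π/2) ⊆ Set.Icc (-(π/2)) (π/2) := by
    rw [Set.uIcc_of_le (by linarith)]; exact Set.Icc_subset_Icc (by linarith) le_rfl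
  have hsubM : Set.uIcc (-b) b ⊆ Set.Icc (-(π/2)) (π/2) := by
    rw [Set.uIcc_of_le (by linarith)]; exact Set.Icc_subset_Icc (by linarith) (by linarith)
  have hIL : IntervalIntegrable (fun s => (w' s) ^ 2) volume (-(π/2)) (-b) :=
    hL2.mono_set (by rw [huB]; exact hsubL)
  have hIR : IntervalIntegrable (fun s => (w' s) ^ 2) volume b (π/2) :=
    hL2.mono_set (by rw [huB]; exact hsubR)
  have hIM : IntervalIntegrable (fun s => (w' s) ^ 2) volume (-b) b :=
    hL2.mono_set (by rw [huB]; exact hsubM)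
  set S := ∫ s in (-(π/2))..(-b), (w' s) ^ 2 with hSdef
  set T := ∫ s in b..(π/2), (w' s) ^ 2 with hTdef
  set E := ∫ s in (-b)..b, (w' s) ^ 2 with hEdef
  have hS0 : 0 ≤ S := integral_nonneg (by linarith) fun s _ => sq_nonneg _
  have hT0 : 0 ≤ T := integral_nonneg (by linarith) fun s _ => sq_nonneg _
  have hEsplit : S + E + T = ∫ s in (-(π/2))..(π/2), (w' s) ^ 2 := by
    rw [integral_add_adjacent_intervals hIL hIM,
      integral_add_adjacent_intervals (hIL.trans hIM) hIR]
  -- boundary terms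
  have hbR : tan b * (w b) ^ 2 ≤ T := by
    have hftc : ∫ s in b..(π/2), w' s = w (π/2) - w b := bl_ftc w w' hderiv hL2 hsubR
    rw [hbc2, zero_sub] at hftc
    have hcs := bl_cs w' (show b < π/2 by linarith) hIR (bl_w'_int w w' hderiv hL2 hsubR)
    rw [hftc, neg_sq] at hcs
    have htan := bl_tan_le hb0 hb
    calc tan b * (w b) ^ 2 ≤ (π/2 - b)⁻¹ * (w b) ^ 2 :=
          mul_le_mul_of_nonneg_right htan (sq_nonneg _)
      _ ≤ (π/2 - b)⁻¹ * ((π/2 - b) * T) :=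
          mul_le_mul_of_nonneg_left hcs (inv_nonneg.2 (by linarith))
      _ = T := inv_mul_cancel_left₀ (show (0:ℝ) < π/2 - b by linarith).ne' _
  have hbL : tan b * (w (-b)) ^ 2 ≤ S := by
    have hftc : ∫ s in (-(π/2))..(-b), w' s = w (-b) - w (-(π/2)) := bl_ftc w w' hderiv hL2 hsubL
    rw [hbc1, sub_zero] at hftc
    have hcs := bl_cs w' (show -(π/2) < -b by linarith) hIL (bl_w'_int w w' hderiv hL2 hsubL)
    rw [hftc] at hcs
    have htan := bl_tan_le hb0 hb
    have heq : -b - -(π/2) = π/2 - b := by ring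
    rw [heq] at hcs
    calc tan b * (w (-b)) ^ 2 ≤ (π/2 - b)⁻¹ * (w (-b)) ^ 2 :=
          mul_le_mul_of_nonneg_right htan (sq_nonneg _)
      _ ≤ (π/2 - b)⁻¹ * ((π/2 - b) * S) :=
          mul_le_mul_of_nonneg_left hcs (inv_nonneg.2 (by linarith))
      _ = S := inv_mul_cancel_left₀ (show (0:ℝ) < π/2 - b by linarith).ne' _
  -- tails of ∫ w²
  have hwcont := bl_contOn w w' hderiv
  have hJL' : IntervalIntegrable (fun s => (w s) ^ 2) volume (-(π/2)) (-b) :=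
    (((hwcont.mono hsubL).pow 2)).intervalIntegrable
  have hJR' : IntervalIntegrable (fun s => (w s) ^ 2) volume b (π/2) :=
    (((hwcont.mono hsubR).pow 2)).intervalIntegrable
  have hJM' : IntervalIntegrable (fun s => (w s) ^ 2) volume (-b) b :=
    (((hwcont.mono hsubM).pow 2)).intervalIntegrable
  set JL := ∫ s in (-(π/2))..(-b), (w s) ^ 2 with hJLdef
  set JR := ∫ s in b..(π/2), (w s) ^ 2 with hJRdef
  set JM := ∫ s in (-b)..b, (w s) ^ 2 with hJMdef
  have hJsplit : JL + JM + JR = ∫ s in (-(π/2))..(π/2), (w s) ^ 2 := by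
    rw [hJLdef, hJMdef, hJRdef, integral_add_adjacent_intervals hJL' hJM',
      integral_add_adjacent_intervals (hJL'.trans hJM') hJR']
  have hJLb : |JL| ≤ C ^ 2 * (π/2 - b) := by
    have := intervalIntegral.norm_integral_le_of_norm_le_const
      (C := C ^ 2) (f := fun s => (w s) ^ 2) (a := -(π/2)) (b := -b) ?_
    · rw [norm_eq_abs] at this
      calc |JL| ≤ C ^ 2 * |(-b) - -(π/2)| := this
        _ = C ^ 2 * (π/2 - b) := by
            rw [abs_of_nonneg (show (0:ℝ) ≤ -b - -(π/2) by linarith)]; ring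
    · intro x hx
      have hx' : x ∈ Set.Icc (-(π/2)) (π/2) := hsubL (Set.uIoc_subset_uIcc hx)
      have h1 := hC x hx'
      rw [norm_eq_abs] at h1
      have h2 : |w x| ^ 2 ≤ C ^ 2 := pow_le_pow_left₀ (abs_nonneg _) h1 2
      show ‖w x ^ 2‖ ≤ C ^ 2
      rw [norm_eq_abs, abs_of_nonneg (sq_nonneg _), ← sq_abs (w x)]
      exact h2
  have hJRb : |JR| ≤ C ^ 2 * (π/2 - b) := by
    have := intervalIntegral.norm_integral_le_of_norm_le_const
      (C := C ^ 2) (f := fun s => (w s) ^ 2) (a := b) (b := π/2) ?_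
    · rw [norm_eq_abs] at this
      calc |JR| ≤ C ^ 2 * |π/2 - b| := this
        _ = C ^ 2 * (π/2 - b) := by
            rw [abs_of_nonneg (show (0:ℝ) ≤ π/2 - b by linarith)]
    · intro x hx
      have hx' : x ∈ Set.Icc (-(π/2)) (π/2) := hsubR (Set.uIoc_subset_uIcc hx)
      have h1 := hC x hx'
      rw [norm_eq_abs] at h1
      have h2 : |w x| ^ 2 ≤ C ^ 2 := pow_le_pow_left₀ (abs_nonneg _) h1 2
      show ‖w x ^ 2‖ ≤ C ^ 2
      rw [norm_eq_abs, abs_of_nonneg (sq_nonneg _), ← sq_abs (w x)]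
      exact h2
  have hcomp := bl_compact w w' hderiv hL2 hb0 hb
  rw [← hEdef, ← hJMdef] at hcomp
  have habsL := abs_le.1 hJLb
  have habsR := abs_le.1 hJRb
  linarith [hcomp, hbR, hbL, hEsplit, hJsplit, habsL.1, habsR.1]

lemma bl_mono
    (hderiv : ∀ s ∈ Set.Icc (-(π/2)) (π/2), HasDerivAt w (w' s) s)
    {b b' : ℝ} (hb0 : 0 < b) (hbb' : b ≤ b') (hb' : b' < π/2) :
    ∫ s in (-b)..b, (w s) ^ 2 / cos s ^ 2 ≤ ∫ s in (-b')..b', (w s) ^ 2 / cos s ^ 2 := by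
  have hsub' : Set.uIcc (-b') b' ⊆ Set.Icc (-(π/2)) (π/2) := by
    rw [Set.uIcc_of_le (by linarith)]; exact Set.Icc_subset_Icc (by linarith) (by linarith)
  have hcos : ∀ s ∈ Set.uIcc (-b') b', 0 < cos s := by
    intro s hs
    rw [Set.uIcc_of_le (by linarith)] at hs
    exact Real.cos_pos_of_mem_Ioo ⟨by linarith [hs.1], by linarith [hs.2]⟩
  have hI : IntervalIntegrable (fun s => (w s) ^ 2 / cos s ^ 2) volume (-b') b' := by
    apply ContinuousOn.intervalIntegrable
    exact (((bl_contOn w w' hderiv).mono hsub').pow 2).div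
      (Real.continuousOn_cos.pow 2) fun s hs => pow_ne_zero 2 (hcos s hs).ne'
  have hIL : IntervalIntegrable (fun s => (w s) ^ 2 / cos s ^ 2) volume (-b') (-b) :=
    hI.mono_set (by
      rw [Set.uIcc_of_le (by linarith : -b' ≤ -b), Set.uIcc_of_le (by linarith : -b' ≤ b')]
      exact Set.Icc_subset_Icc le_rfl (by linarith))
  have hIM : IntervalIntegrable (fun s => (w s) ^ 2 / cos s ^ 2) volume (-b) b :=
    hI.mono_set (by
      rw [Set.uIcc_of_le (by linarith : -b ≤ b), Set.uIcc_of_le (by linarith : -b' ≤ b')]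
      exact Set.Icc_subset_Icc (by linarith) (by linarith))
  have hIR : IntervalIntegrable (fun s => (w s) ^ 2 / cos s ^ 2) volume b b' :=
    hI.mono_set (by
      rw [Set.uIcc_of_le hbb', Set.uIcc_of_le (by linarith : -b' ≤ b')]
      exact Set.Icc_subset_Icc (by linarith) le_rfl)
  have h1 : 0 ≤ ∫ s in (-b')..(-b), (w s) ^ 2 / cos s ^ 2 :=
    integral_nonneg (by linarith) fun s _ => div_nonneg (sq_nonneg _) (sq_nonneg _)
  have h2 : 0 ≤ ∫ s in b..b', (w s) ^ 2 / cos s ^ 2 :=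
    integral_nonneg hbb' fun s _ => div_nonneg (sq_nonneg _) (sq_nonneg _)
  have hsplit : (∫ s in (-b')..(-b), (w s) ^ 2 / cos s ^ 2) + (∫ s in (-b)..b, (w s) ^ 2 / cos s ^ 2)
      + ∫ s in b..b', (w s) ^ 2 / cos s ^ 2 = ∫ s in (-b')..b', (w s) ^ 2 / cos s ^ 2 := by
    rw [integral_add_adjacent_intervals hIL hIM,
      integral_add_adjacent_intervals (hIL.trans hIM) hIR]
  linarith

lemma bl_real_final
    (hderiv : ∀ s ∈ Set.Icc (-(π/2)) (π/2), HasDerivAt w (w' s) s)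
    (hL2 : IntervalIntegrable (fun s => (w' s) ^ 2) volume (-(π/2)) (π/2))
    (hbc1 : w (-(π/2)) = 0) (hbc2 : w (π/2) = 0)
    {b : ℝ} (hb0 : 0 < b) (hb : b < π/2) :
    (1/4) * ∫ s in (-b)..b, (w s) ^ 2 / cos s ^ 2 ≤
      (∫ s in (-(π/2))..(π/2), (w' s) ^ 2) - (1/4) * (∫ s in (-(π/2))..(π/2), (w s) ^ 2) := by
  obtain ⟨C, hC⟩ := (isCompact_Icc (a := -(π/2)) (b := π/2)).exists_bound_of_continuousOn
    (bl_contOn w w' hderiv)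
  refine le_of_forall_pos_le_add fun ε hε => ?_
  set D : ℝ := (1/2) * (C ^ 2 + 1) with hD
  have hD0 : 0 < D := by positivity
  set η : ℝ := min (π/2 - b) (ε / D) with hη
  have hη0 : 0 < η := lt_min (by linarith) (by positivity)
  set b' : ℝ := π/2 - η with hb'
  have hbb' : b ≤ b' := by
    have : η ≤ π/2 - b := min_le_left _ _
    simp only [hb']; linarith
  have hb'2 : b' < π/2 := by simp only [hb']; linarith
  have hb'0 : 0 < b' := lt_of_lt_of_le hb0 hbb'
  have hperb := bl_perb w w' hderiv hL2 hbc1 hbc2 hb'0 hb'2 hC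
  have hmono := bl_mono w w' hderiv hb0 hbb' hb'2
  have herr : (1/2) * (π/2 - b') * C ^ 2 ≤ ε := by
    have h1 : π/2 - b' = η := by simp only [hb']; ring
    have h2 : η ≤ ε / D := min_le_right _ _
    rw [h1]
    calc (1/2) * η * C ^ 2 ≤ (1/2) * (ε / D) * C ^ 2 := by nlinarith [sq_nonneg C]
      _ ≤ ε := by
          have hD0' : (0:ℝ) < 1/2*(C^2+1) := by positivity
          rw [show (1:ℝ)/2 * (ε / (1/2*(C^2+1))) * C^2 = ε * (1/2*C^2) / (1/2*(C^2+1)) by ring,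
            div_le_iff₀ hD0']
          nlinarith [hε.le, sq_nonneg C]
  linarith

end PerB

noncomputable def blb (n : ℕ) : ℝ := π/2 - π/2 / (n + 2)

lemma blb_lt (n : ℕ) : blb n < π/2 := by
  have h : (0:ℝ) < (π/2) / ((n:ℝ) + 2) := by positivity
  unfold blb; linarith

lemma blb_pos (n : ℕ) : 0 < blb n := by
  have hpi : (0:ℝ) < π/2 := by positivity
  have h2 : (π/2) / ((n:ℝ) + 2) ≤ (π/2) / 2 := by
    apply div_le_div_of_nonneg_left hpi.le (by norm_num)
    linarith [Nat.cast_nonneg (α := ℝ) n]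
  unfold blb; linarith

lemma blb_mono : Monotone blb := by
  intro n m hnm
  have hpi : (0:ℝ) < π/2 := by positivity
  have h1 : (π/2) / ((m:ℝ) + 2) ≤ (π/2) / ((n:ℝ) + 2) := by
    apply div_le_div_of_nonneg_left hpi.le (by positivity)
    exact add_le_add_left (Nat.cast_le.2 hnm) 2
  unfold blb; linarith

/-- Sharp borderline (`g = -1/4`) Hardy-type inequality: for `w ∈ H¹([-π/2,π/2])`
vanishing at the endpoints,
`(1/4)∫ sec²(s) w² ≤ ∫ w'² - (1/4)∫ w²`. -/
theorem borderline_sec_squared_inequality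
    (w w' : ℝ → ℝ)
    (hderiv : ∀ s ∈ Set.Icc (-(π/2)) (π/2), HasDerivAt w (w' s) s)
    (hL2 : IntervalIntegrable (fun s => (w' s) ^ 2) volume (-(π/2)) (π/2))
    (hbc1 : w (-(π/2)) = 0) (hbc2 : w (π/2) = 0) :
    (1/4 : ENNReal) * ∫⁻ s in Set.Ioo (-(π/2)) (π/2),
        ENNReal.ofReal ((w s) ^ 2 / cos s ^ 2) ≤
      ENNReal.ofReal ((∫ s in (-(π/2))..(π/2), (w' s) ^ 2)
        - (1/4) * ∫ s in (-(π/2))..(π/2), (w s) ^ 2) := by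
  have hpi : (0:ℝ) < π/2 := by positivity
  -- clamped version of w, globally continuous
  set c : ℝ → ℝ := fun s => max (-(π/2)) (min (π/2) s) with hc
  have hcmem : ∀ s, c s ∈ Set.Icc (-(π/2)) (π/2) := fun s =>
    ⟨le_max_left _ _, max_le (by linarith) (min_le_left _ _)⟩
  have hccont : Continuous c := continuous_const.max (continuous_const.min continuous_id)
  have hWcont : Continuous (fun s => w (c s)) := by
    rw [continuous_iff_continuousAt]
    intro s
    exact ((hderiv (c s) (hcmem s)).continuousAt).comp hccont.continuousAt
  have hceq : ∀ s ∈ Set.Icc (-(π/2)) (π/2), c s = s := by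
    intro s hs
    simp only [hc]
    rw [min_eq_right hs.2, max_eq_right hs.1]
  set G : ℝ → ENNReal := fun s => ENNReal.ofReal ((w (c s)) ^ 2 / cos s ^ 2) with hG
  have hGmeas : Measurable G := by
    apply ENNReal.measurable_ofReal.comp
    exact ((hWcont.pow 2).measurable.div ((Real.continuous_cos.pow 2).measurable))
  -- rewrite the lintegral using G
  have hIooEq : ∫⁻ s in Set.Ioo (-(π/2)) (π/2), ENNReal.ofReal ((w s) ^ 2 / cos s ^ 2)
      = ∫⁻ s in Set.Ioo (-(π/2)) (π/2), G s := by
    refine setLIntegral_congr_fun measurableSet_Ioo (fun s hs => ?_)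
    rw [hG]
    simp only []
    rw [hceq s (Set.mem_Icc_of_Ioo hs)]
  -- the exhausting sequence
  have hbn_lt := blb_lt
  have hbn_pos := blb_pos
  have hbn_mono := blb_mono
  set Sn : ℕ → Set ℝ := fun n => Set.Icc (-(blb n)) (blb n) with hSn
  have hSn_mono : Monotone Sn := by
    intro n m hnm
    exact Set.Icc_subset_Icc (neg_le_neg (blb_mono hnm)) (blb_mono hnm)
  have hUnion : (⋃ n, Sn n) = Set.Ioo (-(π/2)) (π/2) := by
    ext x
    simp only [Set.mem_iUnion, hSn, Set.mem_Icc, Set.mem_Ioo]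
    constructor
    · rintro ⟨n, h1, h2⟩
      exact ⟨lt_of_lt_of_le (neg_lt_neg (hbn_lt n)) h1, lt_of_le_of_lt h2 (hbn_lt n)⟩
    · rintro ⟨h1, h2⟩
      have habs : |x| < π/2 := abs_lt.2 ⟨by linarith, h2⟩
      have hd : (0:ℝ) < π/2 - |x| := by linarith
      obtain ⟨n, hn⟩ := exists_nat_gt ((π/2) / (π/2 - |x|))
      have h3 : (π/2) / (π/2 - |x|) < (n:ℝ) + 2 := by linarith
      have h4 : π/2 < ((n:ℝ) + 2) * (π/2 - |x|) := by
        rw [div_lt_iff₀ hd] at h3; linarith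
      have h5 : (π/2) / ((n:ℝ) + 2) < π/2 - |x| := by
        rw [div_lt_iff₀ (by positivity)]; linarith
      have h6 : |x| ≤ blb n := by unfold blb; linarith
      exact ⟨n, (abs_le.1 h6).1, (abs_le.1 h6).2⟩
  set ν : Measure ℝ := volume.withDensity G with hν
  have hν_apply : ∀ s : Set ℝ, MeasurableSet s → ν s = ∫⁻ x in s, G x := fun s hs =>
    withDensity_apply G hs
  have hpern : ∀ n, (1/4 : ENNReal) * ν (Sn n) ≤
      ENNReal.ofReal ((∫ s in (-(π/2))..(π/2), (w' s) ^ 2)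
        - (1/4) * ∫ s in (-(π/2))..(π/2), (w s) ^ 2) := by
    intro n
    have hb0 := hbn_pos n
    have hblt := hbn_lt n
    have hsub : Set.Icc (-(blb n)) (blb n) ⊆ Set.Icc (-(π/2)) (π/2) :=
      Set.Icc_subset_Icc (by linarith) (by linarith)
    have hcos : ∀ s ∈ Set.Icc (-(blb n)) (blb n), 0 < cos s := by
      intro s hs
      obtain ⟨hs1, hs2⟩ := hs
      exact Real.cos_pos_of_mem_Ioo ⟨by linarith, by linarith⟩
    have hcontOn : ContinuousOn (fun s => (w s) ^ 2 / cos s ^ 2) (Set.Icc (-(blb n)) (blb n)) := by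
      refine ContinuousOn.div ?_ (Real.continuousOn_cos.pow 2)
        (fun s hs => pow_ne_zero 2 (hcos s hs).ne')
      exact ((bl_contOn w w' hderiv).mono hsub).pow 2
    have hintOn : IntegrableOn (fun s => (w s) ^ 2 / cos s ^ 2)
        (Set.Icc (-(blb n)) (blb n)) volume := hcontOn.integrableOn_Icc
    have e1 : ν (Sn n) = ∫⁻ x in Set.Icc (-(blb n)) (blb n), G x := hν_apply _ measurableSet_Icc
    have e2 : ∫⁻ x in Set.Icc (-(blb n)) (blb n), G x
        = ∫⁻ x in Set.Icc (-(blb n)) (blb n), ENNReal.ofReal ((w x) ^ 2 / cos x ^ 2) := by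
      refine setLIntegral_congr_fun measurableSet_Icc (fun s hs => ?_)
      rw [hG]; simp only []; rw [hceq s (hsub hs)]
    have e3 : ∫⁻ x in Set.Icc (-(blb n)) (blb n), ENNReal.ofReal ((w x) ^ 2 / cos x ^ 2)
        = ENNReal.ofReal (∫ x in Set.Icc (-(blb n)) (blb n), (w x) ^ 2 / cos x ^ 2) :=
      (ofReal_integral_eq_lintegral_ofReal hintOn
        (ae_of_all _ fun s => div_nonneg (sq_nonneg _) (sq_nonneg _))).symm
    have e4 : ∫ x in Set.Icc (-(blb n)) (blb n), (w x) ^ 2 / cos x ^ 2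
        = ∫ x in (-(blb n))..(blb n), (w x) ^ 2 / cos x ^ 2 := by
      rw [intervalIntegral.integral_of_le (by linarith), integral_Icc_eq_integral_Ioc]
    have hreal := bl_real_final w w' hderiv hL2 hbc1 hbc2 hb0 hblt
    have hq : (1/4 : ENNReal) = ENNReal.ofReal (1/4) := by
      rw [ENNReal.ofReal_div_of_pos (by norm_num)]
      norm_num
    rw [e1, e2, e3, e4, hq, ← ENNReal.ofReal_mul (by norm_num)]
    exact ENNReal.ofReal_le_ofReal hreal
  have htends : Filter.Tendsto (fun n => ν (Sn n)) Filter.atTop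
      (𝓝 (ν (Set.Ioo (-(π/2)) (π/2)))) := by
    have h := tendsto_measure_iUnion_atTop (μ := ν) hSn_mono
    rwa [hUnion] at h
  have htends2 : Filter.Tendsto (fun n => (1/4 : ENNReal) * ν (Sn n)) Filter.atTop
      (𝓝 ((1/4 : ENNReal) * ν (Set.Ioo (-(π/2)) (π/2)))) :=
    ENNReal.Tendsto.const_mul htends (Or.inr (by norm_num))
  have hfinal := le_of_tendsto' htends2 hpern
  rw [hIooEq, ← hν_apply _ measurableSet_Ioo]
  exact hfinal
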